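/- Constant-rate caching is optimal: given the optimal per-slot cached amounts q*_{nu}, define the constant-rate caching policy c*(t,u) = Σ_{n=1}^N (q*_{nu}/T_s)·1_{[(n−1)T_s, nT_s)}(t). Then A(t, c*) and B(t, c*) agree with the piecewise-linear interpolants Ā(t) and B̄(t) of the slot-transition values a_n = A(nT_s, c*) and b_n = B(nT_s, c*); consequently, any transmission policy feasible for the relaxed problem (constraints imposed only at slot transitions, with piecewise-linear departure curve) is also feasible for the original continuous-time problem under the policy c*. -/

import Mathlib

open MeasureTheory Set

lemma step_eval {N : ℕ} {Ts : ℝ} (hTs : 0 < Ts) (v : Fin N → ℝ) (k : Fin N)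
    {τ : ℝ} (hτ : τ ∈ Set.Ico (((k : ℕ) : ℝ) * Ts) ((((k : ℕ) : ℝ) + 1) * Ts)) :
    (∑ m : Fin N, (Set.Ico (((m : ℕ) : ℝ) * Ts) ((((m : ℕ) : ℝ) + 1) * Ts)).indicator
      (fun _ => v m) τ) = v k := by
  rw [Finset.sum_eq_single k]
  · exact Set.indicator_of_mem hτ _
  · intro m _ hm
    apply Set.indicator_of_notMem
    rintro ⟨h1, h2⟩
    rcases lt_or_gt_of_ne (fun h : (m : ℕ) = (k : ℕ) => hm (Fin.ext h)) with h | h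
    · have h' : ((m : ℕ) : ℝ) + 1 ≤ ((k : ℕ) : ℝ) := by exact_mod_cast h
      have := mul_le_mul_of_nonneg_right h' hTs.le
      linarith [hτ.1]
    · have h' : ((k : ℕ) : ℝ) + 1 ≤ ((m : ℕ) : ℝ) := by exact_mod_cast h
      have := mul_le_mul_of_nonneg_right h' hTs.le
      linarith [hτ.2]
  · intro h; exact absurd (Finset.mem_univ k) h

lemma step_intInt {N : ℕ} (Ts : ℝ) (v : Fin N → ℝ) (x y : ℝ) :
    IntervalIntegrable (fun t => ∑ m : Fin N,
      (Set.Ico (((m : ℕ) : ℝ) * Ts) ((((m : ℕ) : ℝ) + 1) * Ts)).indicator (fun _ => v m) t)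
      volume x y := by
  have : (fun t => ∑ m : Fin N,
      (Set.Ico (((m : ℕ) : ℝ) * Ts) ((((m : ℕ) : ℝ) + 1) * Ts)).indicator (fun _ => v m) t)
      = ∑ m : Fin N, (fun t =>
      (Set.Ico (((m : ℕ) : ℝ) * Ts) ((((m : ℕ) : ℝ) + 1) * Ts)).indicator (fun _ => v m) t) := by
    funext t; simp
  rw [this]
  apply IntervalIntegrable.sum
  intro m _
  rw [intervalIntegrable_iff]
  refine MeasureTheory.Integrable.indicator ?_ measurableSet_Ico
  refine (integrableOn_const_iff (C := v m)).mpr (Or.inr ?_)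
  rw [Set.uIoc]
  exact measure_Ioc_lt_top

lemma slot_integral {g : ℝ → ℝ} {a Ts v : ℝ} (hTs : 0 < Ts)
    (hg : ∀ τ ∈ Set.Ico a (a + Ts), g τ = v)
    (hint : ∀ x y, IntervalIntegrable g volume x y)
    {θ : ℝ} (hθ0 : 0 ≤ θ) (hθ1 : θ ≤ 1) :
    ∫ τ in (0:ℝ)..(a + θ * Ts), g τ = (∫ τ in (0:ℝ)..a, g τ) + θ * Ts * v := by
  have hle : a ≤ a + θ * Ts := by nlinarith
  have h1 : ∫ τ in a..(a + θ * Ts), g τ = θ * Ts * v := by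
    have hcongr : ∫ τ in a..(a + θ * Ts), g τ = ∫ τ in a..(a + θ * Ts), v := by
      apply intervalIntegral.integral_congr_ae
      have hne : ∀ᵐ x : ℝ, x ≠ a + θ * Ts := by
        rw [ae_iff]; simpa using measure_singleton (a + θ * Ts)
      filter_upwards [hne] with x hx hmem
      rw [Set.uIoc_of_le hle] at hmem
      have hx2 : x < a + θ * Ts := lt_of_le_of_ne hmem.2 hx
      exact hg x ⟨hmem.1.le, by nlinarith⟩
    rw [hcongr, intervalIntegral.integral_const, smul_eq_mul]; ring
  rw [← intervalIntegral.integral_add_adjacent_intervals (hint 0 a) (hint a (a + θ * Ts)), h1]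

/-- Constant-rate caching is optimal: with the piecewise-constant caching policy
`c*(t,u) = q*ₙᵤ/Tₛ` on slot `n`, the curves `A(·,c*)` and `B(·,c*)` are the
piecewise-linear interpolants of their slot-transition values; consequently any
nondecreasing, slot-wise linear departure curve satisfying the constraints at slot
transitions is feasible for the continuous-time problem under `c*`. -/
theorem constant_rate_caching_optimal
    (N U : ℕ) (Ts C : ℝ) (hTs : 0 < Ts) (hC : 0 ≤ C)
    (s q : Fin N → Fin U → ℝ)
    (hs : ∀ n u, 0 ≤ s n u) (hq : ∀ n u, 0 ≤ q n u ∧ q n u ≤ Ts * s n u)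
    (ρ : Fin N → Fin U → Option (Fin N × Fin U)) :
    let sFun : Fin U → ℝ → ℝ := fun u t =>
      ∑ n : Fin N, (Set.Ico (((n : ℕ) : ℝ) * Ts) ((((n : ℕ) : ℝ) + 1) * Ts)).indicator
        (fun _ => s n u) t
    let cStar : Fin U → ℝ → ℝ := fun u t =>
      ∑ n : Fin N, (Set.Ico (((n : ℕ) : ℝ) * Ts) ((((n : ℕ) : ℝ) + 1) * Ts)).indicator
        (fun _ => q n u / Ts) t
    let cRho : Fin U → ℝ → ℝ := fun u t =>
      ∑ n : Fin N, (Set.Ico (((n : ℕ) : ℝ) * Ts) ((((n : ℕ) : ℝ) + 1) * Ts)).indicator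
        (fun _ => (ρ n u).elim 0 (fun p => q p.1 p.2) / Ts) t
    let A : ℝ → ℝ := fun t => ∑ u : Fin U, ∫ τ in (0:ℝ)..t, (sFun u τ - cRho u τ)
    let B : ℝ → ℝ := fun t => C + ∫ τ in (0:ℝ)..t, ∑ u : Fin U, (sFun u τ - cStar u τ)
    -- A and B coincide with the piecewise-linear interpolants of their grid values
    (∀ n : ℕ, 1 ≤ n → n ≤ N → ∀ θ ∈ Set.Icc (0:ℝ) 1,
      A (((n : ℝ) - 1) * Ts + θ * Ts)
          = (1 - θ) * A (((n : ℝ) - 1) * Ts) + θ * A ((n : ℝ) * Ts)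
      ∧ B (((n : ℝ) - 1) * Ts + θ * Ts)
          = (1 - θ) * B (((n : ℝ) - 1) * Ts) + θ * B ((n : ℝ) * Ts))
    -- feasibility transfer from the relaxed (slot-transition) problem
    ∧ (∀ D : ℝ → ℝ,
        (∀ n : ℕ, n ≤ N → A ((n : ℝ) * Ts) ≤ D ((n : ℝ) * Ts)
            ∧ D ((n : ℝ) * Ts) ≤ B ((n : ℝ) * Ts)) →
        (∀ n : ℕ, 1 ≤ n → n ≤ N → ∀ θ ∈ Set.Icc (0:ℝ) 1,
          D (((n : ℝ) - 1) * Ts + θ * Ts)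
            = (1 - θ) * D (((n : ℝ) - 1) * Ts) + θ * D ((n : ℝ) * Ts)) →
        ∀ t ∈ Set.Icc (0:ℝ) ((N : ℝ) * Ts), A t ≤ D t ∧ D t ≤ B t) := by
  intro sFun cStar cRho A B
  -- interval integrability of the per-user integrand for A
  have hintA : ∀ u : Fin U, ∀ x y,
      IntervalIntegrable (fun τ => sFun u τ - cRho u τ) volume x y := fun u x y =>
    (step_intInt Ts (fun m => s m u) x y).sub
      (step_intInt Ts (fun m => (ρ m u).elim 0 (fun p => q p.1 p.2) / Ts) x y)
  -- interval integrability of the integrand for B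
  have hintB : ∀ x y,
      IntervalIntegrable (fun τ => ∑ u : Fin U, (sFun u τ - cStar u τ)) volume x y := by
    intro x y
    have he : (fun τ => ∑ u : Fin U, (sFun u τ - cStar u τ))
        = ∑ u : Fin U, (fun τ => sFun u τ - cStar u τ) := by funext τ; simp
    rw [he]
    exact IntervalIntegrable.sum _ (fun u _ =>
      (step_intInt Ts (fun m => s m u) x y).sub
        (step_intInt Ts (fun m => q m u / Ts) x y))
  -- key affine property on each slot
  have keyA : ∀ n : ℕ, 1 ≤ n → n ≤ N → ∃ K : ℝ, ∀ θ : ℝ, 0 ≤ θ → θ ≤ 1 →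
      A (((n : ℝ) - 1) * Ts + θ * Ts) = A (((n : ℝ) - 1) * Ts) + θ * K := by
    intro n h1 h2
    set k : Fin N := ⟨n - 1, by omega⟩ with hkdef
    have hk : ((k : ℕ) : ℝ) = (n : ℝ) - 1 := by
      show (((n - 1 : ℕ)) : ℝ) = (n : ℝ) - 1
      rw [Nat.cast_sub h1]; simp
    refine ⟨∑ u : Fin U, Ts * (s k u - (ρ k u).elim 0 (fun p => q p.1 p.2) / Ts), ?_⟩
    intro θ hθ0 hθ1
    have hg : ∀ u : Fin U, ∀ τ ∈ Set.Ico (((n : ℝ) - 1) * Ts) (((n : ℝ) - 1) * Ts + Ts),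
        sFun u τ - cRho u τ = s k u - (ρ k u).elim 0 (fun p => q p.1 p.2) / Ts := by
      intro u τ hτ
      have hτ' : τ ∈ Set.Ico (((k : ℕ) : ℝ) * Ts) ((((k : ℕ) : ℝ) + 1) * Ts) := by
        rw [hk]; refine ⟨hτ.1, ?_⟩
        have := hτ.2; linarith [hτ.2]
      show (∑ m : Fin N, (Set.Ico (((m : ℕ) : ℝ) * Ts) ((((m : ℕ) : ℝ) + 1) * Ts)).indicator
          (fun _ => s m u) τ)
        - (∑ m : Fin N, (Set.Ico (((m : ℕ) : ℝ) * Ts) ((((m : ℕ) : ℝ) + 1) * Ts)).indicator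
          (fun _ => (ρ m u).elim 0 (fun p => q p.1 p.2) / Ts) τ) = _
      rw [step_eval hTs (fun m => s m u) k hτ',
        step_eval hTs (fun m => (ρ m u).elim 0 (fun p => q p.1 p.2) / Ts) k hτ']
    have hstep : ∀ u ∈ Finset.univ (α := Fin U),
        (∫ τ in (0:ℝ)..(((n : ℝ) - 1) * Ts + θ * Ts), (sFun u τ - cRho u τ))
        = (∫ τ in (0:ℝ)..(((n : ℝ) - 1) * Ts), (sFun u τ - cRho u τ))
          + θ * (Ts * (s k u - (ρ k u).elim 0 (fun p => q p.1 p.2) / Ts)) := by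
      intro u _
      have := slot_integral (g := fun τ => sFun u τ - cRho u τ) hTs (hg u) (hintA u) hθ0 hθ1
      rw [this]; ring
    show (∑ u : Fin U, ∫ τ in (0:ℝ)..(((n : ℝ) - 1) * Ts + θ * Ts), (sFun u τ - cRho u τ)) = _
    rw [Finset.sum_congr rfl hstep, Finset.sum_add_distrib, ← Finset.mul_sum]
  have keyB : ∀ n : ℕ, 1 ≤ n → n ≤ N → ∃ K : ℝ, ∀ θ : ℝ, 0 ≤ θ → θ ≤ 1 →
      B (((n : ℝ) - 1) * Ts + θ * Ts) = B (((n : ℝ) - 1) * Ts) + θ * K := by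
    intro n h1 h2
    set k : Fin N := ⟨n - 1, by omega⟩ with hkdef
    have hk : ((k : ℕ) : ℝ) = (n : ℝ) - 1 := by
      show (((n - 1 : ℕ)) : ℝ) = (n : ℝ) - 1
      rw [Nat.cast_sub h1]; simp
    refine ⟨Ts * ∑ u : Fin U, (s k u - q k u / Ts), ?_⟩
    intro θ hθ0 hθ1
    have hg : ∀ τ ∈ Set.Ico (((n : ℝ) - 1) * Ts) (((n : ℝ) - 1) * Ts + Ts),
        (∑ u : Fin U, (sFun u τ - cStar u τ)) = ∑ u : Fin U, (s k u - q k u / Ts) := by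
      intro τ hτ
      have hτ' : τ ∈ Set.Ico (((k : ℕ) : ℝ) * Ts) ((((k : ℕ) : ℝ) + 1) * Ts) := by
        rw [hk]; exact ⟨hτ.1, by linarith [hτ.2]⟩
      refine Finset.sum_congr rfl (fun u _ => ?_)
      show (∑ m : Fin N, (Set.Ico (((m : ℕ) : ℝ) * Ts) ((((m : ℕ) : ℝ) + 1) * Ts)).indicator
          (fun _ => s m u) τ)
        - (∑ m : Fin N, (Set.Ico (((m : ℕ) : ℝ) * Ts) ((((m : ℕ) : ℝ) + 1) * Ts)).indicator
          (fun _ => q m u / Ts) τ) = _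
      rw [step_eval hTs (fun m => s m u) k hτ',
        step_eval hTs (fun m => q m u / Ts) k hτ']
    have := slot_integral (g := fun τ => ∑ u : Fin U, (sFun u τ - cStar u τ)) hTs hg hintB hθ0 hθ1
    show C + (∫ τ in (0:ℝ)..(((n : ℝ) - 1) * Ts + θ * Ts),
        ∑ u : Fin U, (sFun u τ - cStar u τ)) = _
    rw [this]; ring
  -- interpolation from the affine property
  have interp : ∀ (F : ℝ → ℝ),
      (∀ n : ℕ, 1 ≤ n → n ≤ N → ∃ K : ℝ, ∀ θ : ℝ, 0 ≤ θ → θ ≤ 1 →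
        F (((n : ℝ) - 1) * Ts + θ * Ts) = F (((n : ℝ) - 1) * Ts) + θ * K) →
      ∀ n : ℕ, 1 ≤ n → n ≤ N → ∀ θ ∈ Set.Icc (0:ℝ) 1,
        F (((n : ℝ) - 1) * Ts + θ * Ts)
          = (1 - θ) * F (((n : ℝ) - 1) * Ts) + θ * F ((n : ℝ) * Ts) := by
    intro F hF n h1 h2 θ hθ
    obtain ⟨K, hK⟩ := hF n h1 h2
    have hend : F ((n : ℝ) * Ts) = F (((n : ℝ) - 1) * Ts) + K := by
      have h := hK 1 zero_le_one le_rfl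
      have he : ((n : ℝ) - 1) * Ts + 1 * Ts = (n : ℝ) * Ts := by ring
      rw [he] at h; simpa using h
    rw [hK θ hθ.1 hθ.2, hend]; ring
  have interpA := interp A keyA
  have interpB := interp B keyB
  refine ⟨fun n h1 h2 θ hθ => ⟨interpA n h1 h2 θ hθ, interpB n h1 h2 θ hθ⟩, ?_⟩
  intro D hgrid hlin t ht
  rcases eq_or_lt_of_le ht.1 with h0 | h0
  · have h := hgrid 0 (Nat.zero_le N)
    norm_num at h
    rw [← h0]
    exact h
  · set n : ℕ := ⌈t / Ts⌉₊ with hn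
    have htpos : 0 < t / Ts := div_pos h0 hTs
    have hn1 : 1 ≤ n := Nat.one_le_iff_ne_zero.mpr (by
      have := Nat.ceil_pos.mpr htpos; omega)
    have hnN : n ≤ N := Nat.ceil_le.mpr ((div_le_iff₀ hTs).mpr (by linarith [ht.2]))
    have hlow : ((n : ℝ) - 1) * Ts ≤ t := by
      have hc : (n : ℝ) < t / Ts + 1 := Nat.ceil_lt_add_one htpos.le
      have : ((n : ℝ) - 1) * Ts < (t / Ts) * Ts := by
        apply mul_lt_mul_of_pos_right _ hTs; linarith
      rw [div_mul_cancel₀ t hTs.ne'] at this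
      linarith
    have hhigh : t ≤ (n : ℝ) * Ts := by
      have hc : t / Ts ≤ (n : ℝ) := Nat.le_ceil (t / Ts)
      have := mul_le_mul_of_nonneg_right hc hTs.le
      rwa [div_mul_cancel₀ t hTs.ne'] at this
    set θ : ℝ := (t - ((n : ℝ) - 1) * Ts) / Ts with hθdef
    have hθ : θ ∈ Set.Icc (0:ℝ) 1 :=
      ⟨div_nonneg (by linarith) hTs.le, by rw [div_le_one hTs]; linarith⟩
    have hteq : t = ((n : ℝ) - 1) * Ts + θ * Ts := by
      rw [hθdef, div_mul_cancel₀ _ hTs.ne']; ring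
    have hA := interpA n hn1 hnN θ hθ
    have hB := interpB n hn1 hnN θ hθ
    have hD := hlin n hn1 hnN θ hθ
    have hg1 := hgrid (n - 1) (by omega)
    have hg2 := hgrid n hnN
    have hcast : ((n - 1 : ℕ) : ℝ) = (n : ℝ) - 1 := by rw [Nat.cast_sub hn1]; simp
    rw [hcast] at hg1
    rw [hteq, hA, hB, hD]
    have h1θ : (0:ℝ) ≤ 1 - θ := by linarith [hθ.2]
    exact ⟨add_le_add (mul_le_mul_of_nonneg_left hg1.1 h1θ)
        (mul_le_mul_of_nonneg_left hg2.1 hθ.1),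
      add_le_add (mul_le_mul_of_nonneg_left hg1.2 h1θ)
        (mul_le_mul_of_nonneg_left hg2.2 hθ.1)⟩
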